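/- Work in the ring R = MvPowerSeries over ℝ in m variables X₁,…,X_m. Let A be a symmetric m×m real matrix with nonnegative entries, p ∈ ℝ^m a probability vector, and t > 0. For i ∈ [m] let Φ_i ∈ R be the formal power series of s ↦ exp( t ∑_{l=1}^m A_{il} p_l (s_l − 1) ), and suppose G₁,…,G_m ∈ R have zero constant term and satisfy G_i = X_i · Φ_i(G₁,…,G_m) for all i ∈ [m]. Then for every multi-index n ∈ ℕ₀^m and all indices i, j ∈ [m] with n_i > 0 and n_j > 0, one has (p_i / n_i) · (coefficient of X^n in G_i) = (p_j / n_j) · (coefficient of X^n in G_j). -/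

import Mathlib

/-- Substitution of a multivariate power series `g` (with zero constant term) into the
one-variable exponential-type series `s ↦ ∑_j (a^j/j!) s^j`: since `coeff d (g^j) = 0`
for `j > |d|` when `g` has zero constant term, the coefficient at `d` is the finite sum
`∑_{j ≤ |d|} (a^j/j!) coeff d (g^j)`. -/
noncomputable def poisFactor {m : ℕ} (a : ℝ) (g : MvPowerSeries (Fin m) ℝ) :
    MvPowerSeries (Fin m) ℝ :=
  fun d => ∑ j ∈ Finset.range ((∑ l, d l) + 1),
    (a ^ j / (Nat.factorial j)) * MvPowerSeries.coeff d (g ^ j)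

/-- The formal power series of `s ↦ exp(t ∑_l A_{il} p_l (s_l - 1))` with the family `g`
substituted for the variables. -/
noncomputable def offspringPGF {m : ℕ} (A : Matrix (Fin m) (Fin m) ℝ) (p : Fin m → ℝ)
    (t : ℝ) (i : Fin m) (g : Fin m → MvPowerSeries (Fin m) ℝ) : MvPowerSeries (Fin m) ℝ :=
  Real.exp (-(t * ∑ l, A i l * p l)) • ∏ l, poisFactor (t * A i l * p l) (g l)

section ThetaAux

open MvPowerSeries Finset

variable {m : ℕ}

/-- The Euler operator `θ_i = X_i ∂/∂X_i`: multiplies the coefficient at `d` by `d i`. -/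
noncomputable def theta (i : Fin m) :
    MvPowerSeries (Fin m) ℝ →ₗ[ℝ] MvPowerSeries (Fin m) ℝ where
  toFun F := fun d => (d i : ℝ) * MvPowerSeries.coeff d F
  map_add' F G := by
    funext d
    show (d i : ℝ) * MvPowerSeries.coeff d (F + G)
        = (d i : ℝ) * MvPowerSeries.coeff d F + (d i : ℝ) * MvPowerSeries.coeff d G
    rw [map_add]; ring
  map_smul' c F := by
    funext d
    show (d i : ℝ) * MvPowerSeries.coeff d (c • F)
        = c * ((d i : ℝ) * MvPowerSeries.coeff d F)
    rw [MvPowerSeries.coeff_smul]; ring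

theorem coeff_theta (i : Fin m) (F : MvPowerSeries (Fin m) ℝ) (d : Fin m →₀ ℕ) :
    MvPowerSeries.coeff d (theta i F) = (d i : ℝ) * MvPowerSeries.coeff d F := rfl

theorem theta_mul (i : Fin m) (F G : MvPowerSeries (Fin m) ℝ) :
    theta i (F * G) = theta i F * G + F * theta i G := by
  ext d
  rw [map_add, coeff_theta, MvPowerSeries.coeff_mul, MvPowerSeries.coeff_mul,
    MvPowerSeries.coeff_mul, Finset.mul_sum, ← Finset.sum_add_distrib]
  refine Finset.sum_congr rfl fun q hq => ?_
  replace hq := Finset.HasAntidiagonal.mem_antidiagonal.mp hq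
  have h : d i = q.1 i + q.2 i := by rw [← hq]; rfl
  rw [coeff_theta, coeff_theta, h]
  push_cast
  ring

theorem theta_one (i : Fin m) : theta i (1 : MvPowerSeries (Fin m) ℝ) = 0 := by
  ext d
  rw [coeff_theta, MvPowerSeries.coeff_one]
  by_cases h : d = 0
  · simp [h]
  · simp [h]

theorem theta_pow (i : Fin m) (g : MvPowerSeries (Fin m) ℝ) (k : ℕ) :
    theta i (g ^ (k + 1)) = ((k + 1 : ℕ) : ℝ) • (g ^ k * theta i g) := by
  induction k with
  | zero => simp [pow_succ, pow_zero, theta_mul, theta_one]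
  | succ k ih =>
      rw [pow_succ, theta_mul, ih, smul_mul_assoc,
        show g ^ k * theta i g * g = g ^ (k + 1) * theta i g by ring]
      push_cast
      module

theorem theta_prod (i : Fin m) (F : Fin m → MvPowerSeries (Fin m) ℝ) (s : Finset (Fin m)) :
    theta i (∏ l ∈ s, F l) = ∑ l ∈ s, theta i (F l) * ∏ k ∈ s.erase l, F k := by
  induction s using Finset.induction_on with
  | empty => simp [theta_one]
  | insert a s' hns ih =>
      rw [Finset.prod_insert hns, theta_mul, ih, Finset.sum_insert hns,
        Finset.erase_insert hns]
      congr 1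
      rw [Finset.mul_sum]
      refine Finset.sum_congr rfl fun l hl => ?_
      rw [Finset.erase_insert_of_ne (by rintro rfl; exact hns hl)]
      rw [Finset.prod_insert (fun h => hns (Finset.mem_of_mem_erase h))]
      ring

theorem coeff_pow_eq_zero {g : MvPowerSeries (Fin m) ℝ}
    (hg : MvPowerSeries.constantCoeff g = 0) :
    ∀ (j : ℕ) (d : Fin m →₀ ℕ), (∑ l, d l) < j → MvPowerSeries.coeff d (g ^ j) = 0 := by
  intro j
  induction j with
  | zero => intro d hd; omega
  | succ j ih =>
      intro d hd
      rw [pow_succ, mul_comm, MvPowerSeries.coeff_mul]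
      refine Finset.sum_eq_zero fun q hq => ?_
      replace hq := Finset.HasAntidiagonal.mem_antidiagonal.mp hq
      by_cases h1 : q.1 = 0
      · have : MvPowerSeries.coeff q.1 g = 0 := by rw [h1]; exact hg
        rw [this, zero_mul]
      · have hsum : ∑ l, d l = (∑ l, q.1 l) + (∑ l, q.2 l) := by
          rw [← Finset.sum_add_distrib]
          exact Finset.sum_congr rfl fun l _ => by rw [← hq]; rfl
        have h2 : 0 < ∑ l, q.1 l := by
          rcases Finsupp.ne_iff.mp h1 with ⟨l, hl⟩
          have : 0 < q.1 l := Nat.pos_of_ne_zero (by simpa using hl)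
          exact lt_of_lt_of_le this (Finset.single_le_sum (f := fun l => q.1 l)
            (fun _ _ => Nat.zero_le _) (Finset.mem_univ l))
        have : (∑ l, q.2 l) < j := by omega
        rw [ih q.2 this, mul_zero]

/-- Partial sum of the exponential series. -/
noncomputable def expPartial (a : ℝ) (g : MvPowerSeries (Fin m) ℝ) (N : ℕ) :
    MvPowerSeries (Fin m) ℝ :=
  ∑ j ∈ Finset.range N, (a ^ j / (Nat.factorial j : ℝ)) • g ^ j

theorem coeff_expPartial (a : ℝ) (g : MvPowerSeries (Fin m) ℝ) (N : ℕ) (d : Fin m →₀ ℕ) :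
    MvPowerSeries.coeff d (expPartial a g N)
      = ∑ j ∈ Finset.range N, (a ^ j / (Nat.factorial j : ℝ)) * MvPowerSeries.coeff d (g ^ j) := by
  rw [expPartial, map_sum]
  exact Finset.sum_congr rfl fun j _ => MvPowerSeries.coeff_smul _ _ _

theorem coeff_poisFactor (a : ℝ) (g : MvPowerSeries (Fin m) ℝ) (d : Fin m →₀ ℕ) :
    MvPowerSeries.coeff d (poisFactor a g)
      = ∑ j ∈ Finset.range ((∑ l, d l) + 1),
          (a ^ j / (Nat.factorial j : ℝ)) * MvPowerSeries.coeff d (g ^ j) := rfl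

theorem coeff_poisFactor_eq_expPartial {g : MvPowerSeries (Fin m) ℝ}
    (hg : MvPowerSeries.constantCoeff g = 0) (a : ℝ) (N : ℕ) (d : Fin m →₀ ℕ)
    (hN : (∑ l, d l) < N) :
    MvPowerSeries.coeff d (poisFactor a g) = MvPowerSeries.coeff d (expPartial a g N) := by
  rw [coeff_poisFactor, coeff_expPartial]
  refine Finset.sum_subset (by intro x hx; simp at hx ⊢; omega) ?_
  intro j hj hj'
  simp only [Finset.mem_range] at hj hj'
  rw [coeff_pow_eq_zero hg j d (by omega), mul_zero]

/-- Two series with equal coefficients up to total degree `∑ d` have equal product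
coefficients at `d`. -/
theorem coeff_mul_congr {F F' H : MvPowerSeries (Fin m) ℝ} (d : Fin m →₀ ℕ)
    (h : ∀ v : Fin m →₀ ℕ, (∑ l, v l) ≤ (∑ l, d l) →
      MvPowerSeries.coeff v F = MvPowerSeries.coeff v F') :
    MvPowerSeries.coeff d (F * H) = MvPowerSeries.coeff d (F' * H) := by
  rw [MvPowerSeries.coeff_mul, MvPowerSeries.coeff_mul]
  refine Finset.sum_congr rfl fun q hq => ?_
  replace hq := Finset.HasAntidiagonal.mem_antidiagonal.mp hq
  have hsum : (∑ l, q.1 l) ≤ ∑ l, d l := by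
    have : ∑ l, d l = (∑ l, q.1 l) + (∑ l, q.2 l) := by
      rw [← Finset.sum_add_distrib]
      exact Finset.sum_congr rfl fun l _ => by rw [← hq]; rfl
    omega
  rw [h q.1 hsum]

set_option maxHeartbeats 1000000 in
theorem theta_poisFactor (i : Fin m) {g : MvPowerSeries (Fin m) ℝ}
    (hg : MvPowerSeries.constantCoeff g = 0) (a : ℝ) :
    theta i (poisFactor a g) = a • (theta i g * poisFactor a g) := by
  ext d
  set s := ∑ l, d l with hs
  have step1 : MvPowerSeries.coeff d (theta i (poisFactor a g))
      = MvPowerSeries.coeff d (theta i (expPartial a g (s + 2))) := by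
    rw [coeff_theta, coeff_theta, coeff_poisFactor_eq_expPartial hg a (s + 2) d (by omega)]
  rw [step1]
  have step2 : theta i (expPartial a g (s + 2))
      = a • (theta i g * expPartial a g (s + 1)) := by
    rw [expPartial, map_sum]
    rw [Finset.sum_range_succ' (fun j => theta i ((a ^ j / (Nat.factorial j : ℝ)) • g ^ j))]
    simp only [pow_zero, Nat.factorial_zero, Nat.cast_one, div_one, one_smul, map_smul,
      theta_one, smul_zero, add_zero]
    rw [expPartial, Finset.mul_sum, Finset.smul_sum]
    refine Finset.sum_congr rfl fun k hk => ?_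
    rw [theta_pow, smul_smul, mul_smul_comm, smul_smul]
    congr 1
    · have hfact : (Nat.factorial (k + 1) : ℝ) = (k + 1 : ℕ) * Nat.factorial k := by
        rw [Nat.factorial_succ]; push_cast; ring
      rw [hfact]
      have h1 : ((k + 1 : ℕ) : ℝ) ≠ 0 := by positivity
      have h2 : (Nat.factorial k : ℝ) ≠ 0 := Nat.cast_ne_zero.mpr (Nat.factorial_ne_zero k)
      field_simp
      ring
    · ring
  rw [step2, MvPowerSeries.coeff_smul, MvPowerSeries.coeff_smul]
  congr 1
  rw [mul_comm (theta i g) (expPartial a g (s + 1)), mul_comm (theta i g) (poisFactor a g)]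
  exact coeff_mul_congr d fun v hv =>
    (coeff_poisFactor_eq_expPartial hg a (s + 1) v (by omega)).symm

theorem theta_X (j i : Fin m) :
    theta j (MvPowerSeries.X i : MvPowerSeries (Fin m) ℝ)
      = if j = i then MvPowerSeries.X i else 0 := by
  ext d
  rw [coeff_theta, MvPowerSeries.coeff_X]
  by_cases hd : d = Finsupp.single i 1
  · subst hd
    by_cases hji : j = i
    · subst hji
      simp [MvPowerSeries.coeff_X]
    · simp [MvPowerSeries.coeff_X, Finsupp.single_apply, Ne.symm hji, hji]
  · by_cases hji : j = i <;> simp [MvPowerSeries.coeff_X, hd, hji]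

theorem theta_offspringPGF (A : Matrix (Fin m) (Fin m) ℝ) (p : Fin m → ℝ) (t : ℝ)
    (G : Fin m → MvPowerSeries (Fin m) ℝ)
    (hG0 : ∀ i, MvPowerSeries.constantCoeff (G i) = 0) (i j : Fin m) :
    theta j (offspringPGF A p t i G)
      = ∑ l, (t * A i l * p l) • (theta j (G l) * offspringPGF A p t i G) := by
  rw [offspringPGF, map_smul, theta_prod]
  rw [Finset.smul_sum]
  refine Finset.sum_congr rfl fun l _ => ?_
  rw [theta_poisFactor j (hG0 l) (t * A i l * p l)]
  rw [smul_mul_assoc, mul_assoc (theta j (G l)),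
    Finset.mul_prod_erase Finset.univ (fun k => poisFactor (t * A i k * p k) (G k))
      (Finset.mem_univ l)]
  rw [smul_comm, mul_smul_comm]

theorem theta_G_rec (A : Matrix (Fin m) (Fin m) ℝ) (p : Fin m → ℝ) (t : ℝ)
    (G : Fin m → MvPowerSeries (Fin m) ℝ)
    (hG0 : ∀ i, MvPowerSeries.constantCoeff (G i) = 0)
    (hGfix : ∀ i, G i = (MvPowerSeries.X i) * offspringPGF A p t i G) (i j : Fin m) :
    theta j (G i) = (if j = i then G i else 0)
      + ∑ l, (t * A i l * p l) • (theta j (G l) * G i) := by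
  conv_lhs => rw [hGfix i]
  rw [theta_mul, theta_X, theta_offspringPGF A p t G hG0 i j]
  congr 1
  · by_cases h : j = i
    · rw [if_pos h, if_pos h, hGfix i]
    · rw [if_neg h, if_neg h, zero_mul]
  · rw [Finset.mul_sum]
    refine Finset.sum_congr rfl fun l _ => ?_
    rw [mul_smul_comm, hGfix i]
    congr 1
    ring

/-- The potential whose Euler derivatives recover `p i • G i`. -/
noncomputable def potentialU (A : Matrix (Fin m) (Fin m) ℝ) (p : Fin m → ℝ) (t : ℝ)
    (G : Fin m → MvPowerSeries (Fin m) ℝ) : MvPowerSeries (Fin m) ℝ :=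
  (∑ l, p l • G l) - (t / 2) • ∑ k, ∑ l, (A k l * p k * p l) • (G k * G l)

theorem theta_potentialU (A : Matrix (Fin m) (Fin m) ℝ) (hAsymm : A.IsSymm)
    (p : Fin m → ℝ) (t : ℝ)
    (G : Fin m → MvPowerSeries (Fin m) ℝ)
    (hG0 : ∀ i, MvPowerSeries.constantCoeff (G i) = 0)
    (hGfix : ∀ i, G i = (MvPowerSeries.X i) * offspringPGF A p t i G) (j : Fin m) :
    theta j (potentialU A p t G) = p j • G j := by
  have hA : ∀ k l, A k l = A l k := fun k l => by
    conv_lhs => rw [← hAsymm]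
    rfl
  rw [potentialU, map_sub, map_sum, map_smul, map_sum]
  -- the double sum with theta applied
  have hdouble : ∀ k l, theta j ((A k l * p k * p l) • (G k * G l))
      = (A k l * p k * p l) • (theta j (G k) * G l)
        + (A k l * p k * p l) • (G k * theta j (G l)) := by
    intro k l
    rw [map_smul, theta_mul, smul_add]
  -- symmetry: the two halves of the double sum are equal
  have hswap : ∑ k, ∑ l, (A k l * p k * p l) • (theta j (G k) * G l)
      = ∑ k, ∑ l, (A k l * p k * p l) • (G k * theta j (G l)) := by
    rw [Finset.sum_comm]
    refine Finset.sum_congr rfl fun k _ => Finset.sum_congr rfl fun l _ => ?_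
    rw [hA l k, mul_comm (theta j (G l)) (G k),
      show A k l * p l * p k = A k l * p k * p l by ring]
  set S2 : MvPowerSeries (Fin m) ℝ
      := ∑ k, ∑ l, (A k l * p k * p l) • (G k * theta j (G l)) with hS2
  have hsplit : ∑ k, ∑ l, theta j ((A k l * p k * p l) • (G k * G l)) = (2 : ℝ) • S2 := by
    calc ∑ k, ∑ l, theta j ((A k l * p k * p l) • (G k * G l))
        = ∑ k, ∑ l, ((A k l * p k * p l) • (theta j (G k) * G l)
            + (A k l * p k * p l) • (G k * theta j (G l))) :=
          Finset.sum_congr rfl fun k _ => Finset.sum_congr rfl fun l _ => hdouble k l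
      _ = (∑ k, ∑ l, (A k l * p k * p l) • (theta j (G k) * G l)) + S2 := by
          rw [← Finset.sum_add_distrib]
          exact Finset.sum_congr rfl fun k _ => Finset.sum_add_distrib
      _ = S2 + S2 := by rw [hswap]
      _ = (2 : ℝ) • S2 := by rw [two_smul]
  have h1 : ∑ x, theta j (p x • G x) = p j • G j + t • S2 := by
    calc ∑ x, theta j (p x • G x)
        = ∑ x, ((if j = x then p x • G x else 0)
            + ∑ l, (p x * (t * A x l * p l)) • (theta j (G l) * G x)) := by
          refine Finset.sum_congr rfl fun x _ => ?_
          rw [map_smul, theta_G_rec A p t G hG0 hGfix x j, smul_add, Finset.smul_sum]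
          congr 1
          · by_cases h : j = x <;> simp [h]
          · exact Finset.sum_congr rfl fun l _ => by rw [smul_smul]
      _ = (∑ x, if j = x then p x • G x else 0)
            + ∑ x, ∑ l, (p x * (t * A x l * p l)) • (theta j (G l) * G x) :=
          Finset.sum_add_distrib
      _ = p j • G j + t • S2 := by
          congr 1
          · rw [Finset.sum_ite_eq]
            simp
          · rw [hS2, Finset.smul_sum]
            refine Finset.sum_congr rfl fun k _ => ?_
            rw [Finset.smul_sum]
            refine Finset.sum_congr rfl fun l _ => ?_
            rw [smul_smul, mul_comm (theta j (G l)) (G k),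
              show p k * (t * A k l * p l) = t * (A k l * p k * p l) by ring]
  have h2 : ∑ x, theta j (∑ l, (A x l * p x * p l) • (G x * G l)) = (2 : ℝ) • S2 := by
    rw [← hsplit]
    exact Finset.sum_congr rfl fun x _ => map_sum _ _ _
  rw [h1, h2, smul_smul, div_mul_cancel₀ t (two_ne_zero), add_sub_cancel_right]

end ThetaAux

/-- consistency of the coagulation solution: if `G_i = X_i · Φ_i(G₁,…,G_m)`
with the `G_i` of zero constant term, then for every multi-index `n` and all `i, j` with
`n_i > 0` and `n_j > 0`, `(p_i/n_i)·coeff_{X^n}(G_i) = (p_j/n_j)·coeff_{X^n}(G_j)`. -/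
theorem progeny_coeff_consistency
    (m : ℕ) (hm : 1 ≤ m)
    (A : Matrix (Fin m) (Fin m) ℝ) (hAsymm : A.IsSymm) (hA0 : ∀ i j, 0 ≤ A i j)
    (p : Fin m → ℝ) (hp0 : ∀ i, 0 ≤ p i) (hp1 : ∑ i, p i = 1)
    (t : ℝ) (ht : 0 < t)
    (G : Fin m → MvPowerSeries (Fin m) ℝ)
    (hG0 : ∀ i, MvPowerSeries.constantCoeff (G i) = 0)
    (hGfix : ∀ i, G i = (MvPowerSeries.X i) * offspringPGF A p t i G) :
    ∀ (n : Fin m →₀ ℕ) (i j : Fin m), 0 < n i → 0 < n j →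
      (p i / (n i : ℝ)) * MvPowerSeries.coeff n (G i)
        = (p j / (n j : ℝ)) * MvPowerSeries.coeff n (G j) := by
  intro n i j hi hj
  have key : ∀ k : Fin m, 0 < n k →
      (p k / (n k : ℝ)) * MvPowerSeries.coeff n (G k)
        = MvPowerSeries.coeff n (potentialU A p t G) := by
    intro k hk
    have h := congrArg (MvPowerSeries.coeff n) (theta_potentialU A hAsymm p t G hG0 hGfix k)
    rw [coeff_theta, MvPowerSeries.coeff_smul] at h
    have hnk : ((n k : ℝ)) ≠ 0 := Nat.cast_ne_zero.mpr hk.ne'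
    field_simp
    linarith [h]
  rw [key i hi, key j hj]
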